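/- Let n ≥ 2, F a field, H = SL_n(F), μ ∈ F^×, and g = diag(μ^{1−n}, μ, …, μ) ∈ H. Suppose l ∈ {1,…,n−1} and there exist x₁,…,x_l ∈ GL_n(F) and λ ∈ F with g^{x₁} ⋯ g^{x_l} = λ·I. Then μ^{ln} = 1. -/

import Mathlib

open Matrix

lemma myRankAddLe {F : Type*} [Field F] {n : ℕ}
    (A B : Matrix (Fin n) (Fin n) F) : (A + B).rank ≤ A.rank + B.rank := by
  classical
  have hr : LinearMap.range (A + B).mulVecLin ≤
      LinearMap.range A.mulVecLin ⊔ LinearMap.range B.mulVecLin := by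
    rintro x ⟨v, rfl⟩
    rw [Matrix.mulVecLin_add]
    exact Submodule.add_mem_sup ⟨v, rfl⟩ ⟨v, rfl⟩
  calc (A + B).rank = Module.finrank F (LinearMap.range (A + B).mulVecLin) := rfl
    _ ≤ Module.finrank F ↥(LinearMap.range A.mulVecLin ⊔ LinearMap.range B.mulVecLin) :=
        Submodule.finrank_mono hr
    _ ≤ A.rank + B.rank := Submodule.finrank_add_le_finrank_add_finrank _ _

lemma myAux {F : Type*} [Field F] {n : ℕ} (μ : F) :
    ∀ L : List (Matrix (Fin n) (Fin n) F), (∀ A ∈ L, (A - μ • 1).rank ≤ 1) →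
      (L.prod - μ ^ L.length • (1 : Matrix (Fin n) (Fin n) F)).rank ≤ L.length := by
  intro L
  induction L with
  | nil => intro _; simp
  | cons A L ih =>
    intro h
    have hA : (A - μ • 1).rank ≤ 1 := h A List.mem_cons_self
    have hL : (L.prod - μ ^ L.length • (1 : Matrix (Fin n) (Fin n) F)).rank ≤ L.length :=
      ih (fun B hB => h B (List.mem_cons_of_mem _ hB))
    have key : (A :: L).prod - μ ^ (A :: L).length • (1 : Matrix (Fin n) (Fin n) F)
        = A * (L.prod - μ ^ L.length • 1) + (μ ^ L.length • 1) * (A - μ • 1) := by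
      simp only [List.prod_cons, List.length_cons, mul_sub, sub_mul, smul_mul_assoc,
        one_mul, Matrix.mul_smul, mul_one, smul_smul, ← pow_succ]
      abel
    rw [key, List.length_cons]
    calc (A * (L.prod - μ ^ L.length • 1) + (μ ^ L.length • 1) * (A - μ • 1)).rank
        ≤ (A * (L.prod - μ ^ L.length • 1)).rank + ((μ ^ L.length • 1) * (A - μ • 1)).rank :=
          myRankAddLe _ _
      _ ≤ (L.prod - μ ^ L.length • 1).rank + (A - μ • 1).rank :=
          add_le_add (Matrix.rank_mul_le_right _ _) (Matrix.rank_mul_le_right _ _)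
      _ ≤ L.length + 1 := add_le_add hL hA

theorem stmt13 {F : Type*} [Field F] {n : ℕ} (hn : 2 ≤ n) (μ : Fˣ)
    (g : Matrix (Fin n) (Fin n) F)
    (hg : g = Matrix.diagonal (fun i : Fin n =>
      if (i : ℕ) = 0 then ((μ⁻¹ : Fˣ) : F) ^ (n - 1) else (μ : F)))
    (l : ℕ) (hl1 : 1 ≤ l) (hl2 : l ≤ n - 1)
    (f : Fin l → Matrix (Fin n) (Fin n) F) (hf : ∀ i, IsUnit (f i).det)
    (lam : F)
    (hprod : (List.ofFn fun i : Fin l => (f i)⁻¹ * g * f i).prod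
      = lam • (1 : Matrix (Fin n) (Fin n) F)) :
    (μ : F) ^ (l * n) = 1 := by
  classical
  obtain ⟨m, rfl⟩ : ∃ m, n = m + 1 := ⟨n - 1, (Nat.succ_pred_eq_of_pos (by omega)).symm⟩
  set d : Fin (m + 1) → F := fun i =>
    if (i : ℕ) = 0 then ((μ⁻¹ : Fˣ) : F) ^ (m + 1 - 1) else (μ : F) with hd
  -- rank of g - μ•1 is ≤ 1
  have hgsub : g - (μ : F) • 1 = Matrix.diagonal (fun i => d i - (μ : F)) := by
    rw [hg, Matrix.smul_one_eq_diagonal, Matrix.diagonal_sub]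
  have hrank1 : (g - (μ : F) • 1).rank ≤ 1 := by
    rw [hgsub, Matrix.rank_diagonal]
    refine Fintype.card_le_one_iff.mpr ?_
    rintro ⟨i, hi⟩ ⟨j, hj⟩
    have hi0 : (i : ℕ) = 0 := by
      by_contra h
      simp only [d, if_neg h, sub_self, ne_eq, not_true_eq_false] at hi
    have hj0 : (j : ℕ) = 0 := by
      by_contra h
      simp only [d, if_neg h, sub_self, ne_eq, not_true_eq_false] at hj
    exact Subtype.ext (Fin.ext (hi0.trans hj0.symm))
  -- each conjugate minus μ•1 has rank ≤ 1
  have hconj : ∀ A ∈ (List.ofFn fun i : Fin l => (f i)⁻¹ * g * f i),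
      (A - (μ : F) • 1).rank ≤ 1 := by
    intro A hA
    rw [List.mem_ofFn] at hA
    obtain ⟨i, rfl⟩ := hA
    have hfi : IsUnit (f i) := (Matrix.isUnit_iff_isUnit_det _).mpr (hf i)
    have : (f i)⁻¹ * g * f i - (μ : F) • 1 = (f i)⁻¹ * (g - (μ : F) • 1) * f i := by
      rw [mul_sub, sub_mul]
      congr 1
      rw [Matrix.mul_smul, mul_one, Matrix.smul_mul, Matrix.nonsing_inv_mul _ (hf i)]
    rw [this]
    calc ((f i)⁻¹ * (g - (μ : F) • 1) * f i).rank
        ≤ ((f i)⁻¹ * (g - (μ : F) • 1)).rank := Matrix.rank_mul_le_left _ _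
      _ ≤ (g - (μ : F) • 1).rank := Matrix.rank_mul_le_right _ _
      _ ≤ 1 := hrank1
  have hlen : (List.ofFn fun i : Fin l => (f i)⁻¹ * g * f i).length = l := by simp
  have hrankl := myAux (μ : F) (List.ofFn fun i : Fin l => (f i)⁻¹ * g * f i) hconj
  rw [hlen, hprod, ← sub_smul] at hrankl
  -- lam = μ^l
  have hlam : lam = (μ : F) ^ l := by
    by_contra hne
    have hnz : lam - (μ : F) ^ l ≠ 0 := sub_ne_zero.mpr hne
    have hu : IsUnit ((lam - (μ : F) ^ l) • (1 : Matrix (Fin (m + 1)) (Fin (m + 1)) F)) := by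
      rw [Matrix.isUnit_iff_isUnit_det, Matrix.det_smul, Matrix.det_one, mul_one]
      exact (IsUnit.mk0 _ hnz).pow _
    rw [Matrix.rank_of_isUnit _ hu, Fintype.card_fin] at hrankl
    omega
  -- determinant of g is 1
  have hdetg : g.det = 1 := by
    rw [hg, Matrix.det_diagonal, Fin.prod_univ_succ]
    simp only [hd]
    have h0 : ((0 : Fin (m + 1)) : ℕ) = 0 := rfl
    rw [if_pos h0]
    have hs : ∀ i : Fin m, (if ((i.succ : Fin (m + 1)) : ℕ) = 0
        then ((μ⁻¹ : Fˣ) : F) ^ (m + 1 - 1) else (μ : F)) = (μ : F) :=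
      fun i => if_neg (Nat.succ_ne_zero _)
    rw [Finset.prod_congr rfl (fun i _ => hs i), Finset.prod_const, Finset.card_univ,
      Fintype.card_fin, Nat.add_sub_cancel, ← mul_pow, Units.inv_mul, one_pow]
  -- determinant of product is 1
  have hdetprod : (List.ofFn fun i : Fin l => (f i)⁻¹ * g * f i).prod.det = 1 := by
    rw [← Matrix.coe_detMonoidHom, map_list_prod, List.map_ofFn]
    have : ∀ i : Fin l, ((f i)⁻¹ * g * f i).det = 1 := fun i => by
      rw [Matrix.det_conj' ((Matrix.isUnit_iff_isUnit_det _).mpr (hf i)), hdetg]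
    simp [Function.comp_def, this, List.prod_ofFn]
  rw [hprod, Matrix.det_smul, Matrix.det_one, mul_one, Fintype.card_fin, hlam,
    ← pow_mul] at hdetprod
  exact hdetprod
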